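/- For every digit χ ∈ {0, 1, 2} and every positive integer k, there exists a natural number n such that 2^n ≥ 3^(k-1) (so that 2^n has at least k ternary digits) and the digit χ occurs nowhere in the last k ternary digits of 2^n, i.e., (2^n / 3^i) % 3 ≠ χ for all i < k. -/

import Mathlib

lemma four_pow_lte (k : ℕ) : ∃ m, 4 ^ 3 ^ k = 1 + 3 ^ (k+1) * m ∧ m % 3 ≠ 0 := by
  induction k with
  | zero => exact ⟨1, by norm_num, by norm_num⟩
  | succ k ih =>
    obtain ⟨m, hm, hm3⟩ := ih
    refine ⟨m + 3^(k+1) * m^2 + 3^(2*k+1) * m^3, ?_, ?_⟩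
    · have h1 : 4 ^ 3 ^ (k+1) = (4 ^ 3 ^ k) ^ 3 := by
        rw [← pow_mul, pow_succ]
      rw [h1, hm]; ring
    · have h2 : m + 3^(k+1) * m^2 + 3^(2*k+1) * m^3
          = m + 3 * (3^k * m^2 + 3^(2*k) * m^3) := by ring
      omega

lemma digit_lo (a b k i : ℕ) (hi : i < k) :
    (a + b * 3 ^ k) / 3 ^ i % 3 = a / 3 ^ i % 3 := by
  have h3 : (3:ℕ) ^ k = 3 ^ (k - i - 1) * 3 * 3 ^ i := by
    rw [← pow_succ, ← pow_add]
    congr 1; omega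
  have h1 : a + b * 3 ^ k = a + (b * 3 ^ (k - i - 1) * 3) * 3 ^ i := by
    rw [h3]; ring
  rw [h1, Nat.add_mul_div_right _ _ (pow_pos (by norm_num) i),
    Nat.add_mul_mod_self_right]

lemma digit_hi (a b k : ℕ) : (a + b * 3 ^ k) / 3 ^ k = a / 3 ^ k + b :=
  Nat.add_mul_div_right _ _ (pow_pos (by norm_num) k)

lemma pow_expand (k n m : ℕ) (hm : 4 ^ 3 ^ (k-1) = 1 + 3 ^ k * m) :
    2 ^ (n + 2 * 3 ^ (k-1)) = 2 ^ n + (2 ^ n * m) * 3 ^ k := by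
  have h : 2 ^ (n + 2 * 3 ^ (k-1)) = 2 ^ n * 4 ^ 3 ^ (k-1) := by
    rw [pow_add, pow_mul]; norm_num
  rw [h, hm]; ring

lemma two_pow_mod_three (n : ℕ) : 2 ^ n % 3 ≠ 0 := by
  intro h
  have h3 : (3:ℕ) ∣ 2 ^ n := Nat.dvd_of_mod_eq_zero h
  have := Nat.Prime.dvd_of_dvd_pow Nat.prime_three h3
  omega

theorem exists_two_pow_avoiding_digit_in_trailing (χ k : ℕ) (hχ : χ < 3) (hk : 0 < k) :
    ∃ n : ℕ, 3 ^ (k - 1) ≤ 2 ^ n ∧ ∀ i < k, 2 ^ n / 3 ^ i % 3 ≠ χ := by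
  suffices h : ∀ K, 1 ≤ K → ∃ n, ∀ i < K, 2 ^ n / 3 ^ i % 3 ≠ χ by
    obtain ⟨n, hn⟩ := h k hk
    obtain ⟨m, hm, hm3⟩ := four_pow_lte (k-1)
    have hk1 : k - 1 + 1 = k := by omega
    rw [hk1] at hm
    have hexp := pow_expand k n m hm
    refine ⟨n + 2 * 3 ^ (k-1), ?_, ?_⟩
    · calc 3 ^ (k-1) ≤ 3 ^ 3 ^ (k-1) :=
            Nat.pow_le_pow_right (by norm_num) (Nat.le_of_lt (Nat.lt_pow_self (by norm_num)))
        _ ≤ 4 ^ 3 ^ (k-1) := Nat.pow_le_pow_left (by norm_num) _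
        _ = 2 ^ (2 * 3 ^ (k-1)) := by rw [pow_mul]; norm_num
        _ ≤ 2 ^ (n + 2 * 3 ^ (k-1)) := Nat.pow_le_pow_right (by norm_num) (by omega)
    · intro i hi
      rw [hexp, digit_lo _ _ _ _ hi]
      exact hn i hi
  intro K hK
  induction K, hK using Nat.le_induction with
  | base =>
    by_cases hχ1 : χ = 1
    · refine ⟨1, ?_⟩; intro i hi; interval_cases i; simp [hχ1]
    · refine ⟨0, ?_⟩; intro i hi; interval_cases i; simp; omega
  | succ K hK1 ih =>
    obtain ⟨n, hn⟩ := ih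
    obtain ⟨m, hm, hm3⟩ := four_pow_lte (K-1)
    have hK2 : K - 1 + 1 = K := by omega
    rw [hK2] at hm
    have hexp := pow_expand K n m hm
    by_cases hd : 2 ^ n / 3 ^ K % 3 = χ
    · refine ⟨n + 2 * 3 ^ (K-1), ?_⟩
      intro i hi
      rcases Nat.lt_or_ge i K with hiK | hiK
      · rw [hexp, digit_lo _ _ _ _ hiK]
        exact hn i hiK
      · have hiK' : i = K := by omega
        subst hiK'
        rw [hexp, digit_hi]
        have hu : (2 ^ n * m) % 3 ≠ 0 := by
          rw [Nat.mul_mod]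
          have h1 := two_pow_mod_three n
          have h2 : 2 ^ n % 3 < 3 := Nat.mod_lt _ (by norm_num)
          have h3 : m % 3 < 3 := Nat.mod_lt _ (by norm_num)
          interval_cases h : 2 ^ n % 3 <;> interval_cases h' : m % 3 <;> simp_all
        omega
    · refine ⟨n, ?_⟩
      intro i hi
      rcases Nat.lt_or_ge i K with hiK | hiK
      · exact hn i hiK
      · have : i = K := by omega
        subst this; exact hd
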